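/- The fixed point of the fluid-limit dynamical system is unique in E: if (q, δ) ∈ E satisfies that all the fluid-limit drift terms are zero, then δ₀ = 1−λ, δ₁ = 0, q₁ = λ, and qᵢ = 0 for i = 2,…,B. -/
import Mathlib


open Finset

/-- The coefficient `p₀(q, δ, λ)` of the fluid-limit dynamics:
`p₀ = 1` if `u = 1 - q₁ - δ₀ - δ₁ > 0`, and `min{λ⁻¹(δ₁ν + q₁ - q₂), 1}` otherwise. -/
noncomputable def fluidP0 (lam nu : ℝ) (q : ℕ → ℝ) (d0 d1 : ℝ) : ℝ :=
  if 1 - q 1 - d0 - d1 > 0 then 1 else min (lam⁻¹ * (d1 * nu + q 1 - q 2)) 1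

/-- The coefficients `pᵢ(q, δ, λ)`: `p₀` as above, and
`pᵢ = (1 - p₀)(qᵢ - q_{i+1})/q₁` for `i ≥ 1`. -/
noncomputable def fluidP (lam nu : ℝ) (q : ℕ → ℝ) (d0 d1 : ℝ) : ℕ → ℝ
  | 0 => fluidP0 lam nu q d0 d1
  | (i + 1) => (1 - fluidP0 lam nu q d0 d1) * (q (i + 1) - q (i + 2)) / q 1

/-- Drift (right-hand side of the ODE) for `qᵢ`, `i = 1, …, B`:
`λ p_{i-1}(q, δ, λ) - (qᵢ - q_{i+1})`. -/
noncomputable def driftQ (lam nu : ℝ) (q : ℕ → ℝ) (d0 d1 : ℝ) (i : ℕ) : ℝ :=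
  lam * fluidP lam nu q d0 d1 (i - 1) - (q i - q (i + 1))

/-- Drift for `δ₀`: `μu - λ(1 - p₀)1{δ₀ > 0}`, with `u = 1 - q₁ - δ₀ - δ₁`. -/
noncomputable def driftD0 (lam mu nu : ℝ) (q : ℕ → ℝ) (d0 d1 : ℝ) : ℝ :=
  mu * (1 - q 1 - d0 - d1) -
    lam * (1 - fluidP0 lam nu q d0 d1) * (if d0 > 0 then 1 else 0)

/-- Drift for `δ₁`: `λ(1 - p₀)1{δ₀ > 0} - νδ₁`. -/
noncomputable def driftD1 (lam nu : ℝ) (q : ℕ → ℝ) (d0 d1 : ℝ) : ℝ :=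
  lam * (1 - fluidP0 lam nu q d0 d1) * (if d0 > 0 then 1 else 0) - nu * d1

/-- Uniqueness of the fixed point of the fluid-limit dynamics in `E`: if a state
`(q, δ₀, δ₁) ∈ E` makes all the drift terms vanish, then necessarily
`δ₀ = 1 - λ`, `δ₁ = 0`, `q₁ = λ`, and `qᵢ = 0` for `i = 2, …, B`. -/

lemma tail_zero (B : ℕ) (q : ℕ → ℝ) (hqB : q (B + 1) = 0)
    (hstep : ∀ i, 2 ≤ i → i ≤ B → q i = q (i + 1)) :
    ∀ j, 2 ≤ j → j ≤ B + 1 → q j = 0 := by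
  intro j h2 hle
  obtain ⟨k, hk⟩ : ∃ k, j + k = B + 1 := ⟨B + 1 - j, by omega⟩
  induction k generalizing j with
  | zero =>
    have hj : j = B + 1 := by omega
    rw [hj]; exact hqB
  | succ n ih =>
    rw [hstep j h2 (by omega)]
    exact ih (j + 1) (by omega) (by omega) (by omega)

theorem fixed_point_unique (B : ℕ) (hB : 1 ≤ B) (lam mu nu : ℝ)
    (hlam0 : 0 < lam) (hlam1 : lam < 1) (hmu : 0 < mu) (hnu : 0 < nu)
    (q : ℕ → ℝ) (d0 d1 : ℝ)
    -- membership in E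
    (hq01 : ∀ i, 1 ≤ i → i ≤ B → q i ∈ Set.Icc (0:ℝ) 1)
    (hmono : ∀ i, 1 ≤ i → i ≤ B → q (i + 1) ≤ q i)
    (hqB : q (B + 1) = 0)
    (hd0mem : d0 ∈ Set.Icc (0:ℝ) 1) (hd1mem : d1 ∈ Set.Icc (0:ℝ) 1)
    (hsum : d0 + d1 + q 1 ≤ 1)
    -- all drifts vanish
    (hfixQ : ∀ i, 1 ≤ i → i ≤ B → driftQ lam nu q d0 d1 i = 0)
    (hfixD0 : driftD0 lam mu nu q d0 d1 = 0)
    (hfixD1 : driftD1 lam nu q d0 d1 = 0) :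
    d0 = 1 - lam ∧ d1 = 0 ∧ q 1 = lam ∧ ∀ i, 2 ≤ i → i ≤ B → q i = 0 := by
  -- u = 0
  have hu0 : 1 - q 1 - d0 - d1 = 0 := by
    rcases lt_or_ge 0 (1 - q 1 - d0 - d1) with hpos | hle
    · exfalso
      have hp : fluidP0 lam nu q d0 d1 = 1 := by rw [fluidP0, if_pos hpos]
      rw [driftD0, hp] at hfixD0
      simp at hfixD0
      rcases hfixD0 with h | h
      · linarith
      · linarith
    · linarith
  have hcond : ¬ (1 - q 1 - d0 - d1 > 0) := by rw [hu0]; exact lt_irrefl 0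
  have hp0eq : fluidP0 lam nu q d0 d1 = min (lam⁻¹ * (d1 * nu + q 1 - q 2)) 1 := by
    rw [fluidP0, if_neg hcond]
  have hp0le : fluidP0 lam nu q d0 d1 ≤ 1 := by rw [hp0eq]; exact min_le_right _ _
  rcases eq_or_lt_of_le hd0mem.1 with h0 | h0
  · -- d0 = 0 : contradiction
    exfalso
    have hind : (if d0 > 0 then (1:ℝ) else 0) = 0 := by
      rw [if_neg]; rw [← h0]; exact lt_irrefl 0
    rw [driftD1, hind] at hfixD1
    have hd1 : d1 = 0 := by
      have : nu * d1 = 0 := by linarith [hfixD1]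
      rcases mul_eq_zero.mp this with h | h
      · linarith
      · exact h
    have hq1 : q 1 = 1 := by linarith
    have hp0nn : 0 ≤ fluidP0 lam nu q d0 d1 := by
      rw [hp0eq]
      refine le_min ?_ (by norm_num)
      apply mul_nonneg (inv_nonneg.mpr hlam0.le)
      have hq21 : q 2 ≤ q 1 := hmono 1 le_rfl hB
      rw [hd1]; linarith
    have hcnn : 0 ≤ lam * (1 - fluidP0 lam nu q d0 d1) :=
      mul_nonneg hlam0.le (by linarith)
    -- geometric decay: q (j+1) ≤ c * q j for 1 ≤ j ≤ B
    have hdec : ∀ j, 1 ≤ j → j ≤ B →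
        q (j + 1) ≤ lam * (1 - fluidP0 lam nu q d0 d1) * q j := by
      intro j h1 hle
      obtain ⟨k, hk⟩ : ∃ k, j + k = B := ⟨B - j, by omega⟩
      induction k generalizing j with
      | zero =>
        have hj : j = B := by omega
        rw [hj, hqB]
        exact mul_nonneg hcnn (hq01 B hB le_rfl).1
      | succ n ih =>
        obtain ⟨m, rfl⟩ : ∃ m, j = m + 1 := ⟨j - 1, by omega⟩
        have ihn := ih (m + 2) (by omega) (by omega) (by omega)
        have h := hfixQ (m + 2) (by omega) (by omega)
        rw [driftQ] at h
        have hidx : m + 2 - 1 = m + 1 := rfl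
        rw [hidx] at h
        simp only [fluidP] at h
        rw [hq1, div_one] at h
        nlinarith [h, ihn]
    have hq2c : q 2 ≤ lam * (1 - fluidP0 lam nu q d0 d1) := by
      have := hdec 1 le_rfl hB
      rw [hq1, mul_one] at this
      exact this
    have h1 := hfixQ 1 le_rfl hB
    rw [driftQ] at h1
    simp only [fluidP] at h1
    rw [hq1] at h1
    -- h1 : lam * p0 - (1 - q 2) = 0, hq2c : q 2 ≤ lam * (1 - p0) ⇒ 1 ≤ lam
    nlinarith [h1, hq2c]
  · -- d0 > 0
    have hind : (if d0 > 0 then (1:ℝ) else 0) = 1 := if_pos h0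
    rw [driftD0, hind, hu0] at hfixD0
    have hl0 : lam * (1 - fluidP0 lam nu q d0 d1) = 0 := by linarith [hfixD0]
    have hp1 : fluidP0 lam nu q d0 d1 = 1 := by
      rcases mul_eq_zero.mp hl0 with h | h
      · linarith
      · linarith
    rw [driftD1, hind, hp1] at hfixD1
    have hd1 : d1 = 0 := by
      have : nu * d1 = 0 := by linarith [hfixD1]
      rcases mul_eq_zero.mp this with h | h
      · linarith
      · exact h
    have hstep : ∀ i, 2 ≤ i → i ≤ B → q i = q (i + 1) := by
      intro i h2 hiB
      obtain ⟨m, rfl⟩ : ∃ m, i = m + 2 := ⟨i - 2, by omega⟩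
      have h := hfixQ (m + 2) (by omega) hiB
      rw [driftQ] at h
      have hidx : m + 2 - 1 = m + 1 := rfl
      rw [hidx] at h
      simp only [fluidP] at h
      rw [hp1] at h
      simp at h
      linarith
    have htail := tail_zero B q hqB hstep
    have hq2 : q 2 = 0 := htail 2 le_rfl (by omega)
    have h1 := hfixQ 1 le_rfl hB
    rw [driftQ] at h1
    simp only [fluidP] at h1
    rw [hp1, hq2] at h1
    have hq1 : q 1 = lam := by linarith
    exact ⟨by linarith, hd1, hq1, fun i h2 hiB => htail i h2 (by omega)⟩
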